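/- Let (W,S) be a Coxeter system and S = S₊ ∪ S₋ a partition such that no element of S₊ is W-conjugate to an element of S₋. Let φ be a weight function with values in a totally ordered abelian group Γ, and let φ' be the weight function with φ'(s̄) = φ(s̄) for s ∈ S₊ and φ'(s̄) = −φ(s̄) for s ∈ S₋. Then the unique ℤ[Γ]-linear map θ : H(W,S,φ) → H(W,S,φ') sending T_w^φ to (−1)^{ℓ₋(w)} T_w^{φ'} is a ℤ[Γ]-algebra isomorphism, where ℓ₋(w) = Σ_{ω ⊆ S₋-classes} ℓ_ω(w). -/

import Mathlib

open Finsupp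

noncomputable section

/-- `e^γ` in the group algebra `ℤ[Γ]`. -/
def expG {Γ : Type*} [AddCommGroup Γ] (γ : Γ) : AddMonoidAlgebra ℤ Γ :=
  AddMonoidAlgebra.single γ 1

/-- `A` is a Hecke algebra for `(W,S,φ)`: a `ℤ[Γ]`-algebra, free with basis
`(T_w)_{w ∈ W}`, with `T_w T_{w'} = T_{ww'}` when lengths add, `T_1 = 1`, and the
quadratic relations `(T_s − e^{φ(s)})(T_s + e^{−φ(s)}) = 0`. -/
structure IsHeckeAlgebra {B W Γ : Type*} [Group W] [AddCommGroup Γ]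
    {M : CoxeterMatrix B} (cs : CoxeterSystem M W) (φ : B → Γ)
    {A : Type*} [Ring A] [Algebra (AddMonoidAlgebra ℤ Γ) A]
    (T : Module.Basis W (AddMonoidAlgebra ℤ Γ) A) : Prop where
  one : T 1 = 1
  mul_of_length_add : ∀ w w' : W,
    cs.length (w * w') = cs.length w + cs.length w' → T w * T w' = T (w * w')
  quadratic : ∀ i : B,
    (T (cs.simple i) - algebraMap (AddMonoidAlgebra ℤ Γ) A (expG (φ i))) *
      (T (cs.simple i) + algebraMap (AddMonoidAlgebra ℤ Γ) A (expG (-φ i))) = 0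

section Aux

variable {B W Γ : Type*} [Group W] [AddCommGroup Γ]
    {M : CoxeterMatrix B} {cs : CoxeterSystem M W} {φ : B → Γ}
    {A : Type*} [Ring A] [Algebra (AddMonoidAlgebra ℤ Γ) A]
    {T : Module.Basis W (AddMonoidAlgebra ℤ Γ) A} (hA : IsHeckeAlgebra cs φ T)

lemma expG_mul_expG (γ δ : Γ) : expG γ * expG (δ) = expG (γ + δ) := by
  simp [expG, AddMonoidAlgebra.single_mul_single]

lemma expG_zero : expG (0 : Γ) = 1 := rfl

include hA in
lemma hecke_simple_mul (i : B) (u : W)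
    (h : cs.length (cs.simple i * u) = cs.length u + 1) :
    T (cs.simple i) * T u = T (cs.simple i * u) :=
  hA.mul_of_length_add _ _ (by rw [h, cs.length_simple]; ring)

include hA in
lemma hecke_sq (i : B) :
    T (cs.simple i) * T (cs.simple i)
      = (expG (φ i) - expG (-φ i)) • T (cs.simple i) + 1 := by
  set c : A := algebraMap (AddMonoidAlgebra ℤ Γ) A (expG (φ i)) with hc
  set c' : A := algebraMap (AddMonoidAlgebra ℤ Γ) A (expG (-φ i)) with hc'
  have hcc : c * c' = 1 := by
    rw [hc, hc', ← map_mul, expG_mul_expG, add_neg_cancel, expG_zero, map_one]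
  have hcomm : T (cs.simple i) * c' = c' * T (cs.simple i) :=
    (Algebra.commutes _ _).symm
  have hq := hA.quadratic i
  rw [← hc, ← hc', sub_mul, mul_add, mul_add, hcomm, hcc] at hq
  rw [Algebra.smul_def, map_sub, ← hc, ← hc', sub_mul]
  have key : T (cs.simple i) * T (cs.simple i) - (c * T (cs.simple i) - c' * T (cs.simple i) + 1)
      = T (cs.simple i) * T (cs.simple i) + c' * T (cs.simple i) - (c * T (cs.simple i) + 1) := by
    abel
  rw [← key] at hq
  exact sub_eq_zero.mp hq

include hA in
lemma hecke_mul_descent (i : B) (u : W)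
    (h : cs.length (cs.simple i * u) + 1 = cs.length u) :
    T (cs.simple i) * T u
      = (expG (φ i) - expG (-φ i)) • T u + T (cs.simple i * u) := by
  set u' := cs.simple i * u with hu'
  have hu : u = cs.simple i * u' := by
    rw [hu', ← mul_assoc, cs.simple_mul_simple_self, one_mul]
  have hlen : cs.length (cs.simple i * u') = cs.length u' + 1 := by
    rw [← hu]; omega
  have h1 : T (cs.simple i) * T u' = T u := by
    rw [hecke_simple_mul hA i u' hlen, ← hu]
  calc T (cs.simple i) * T u
      = T (cs.simple i) * (T (cs.simple i) * T u') := by rw [h1]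
    _ = (T (cs.simple i) * T (cs.simple i)) * T u' := by rw [mul_assoc]
    _ = ((expG (φ i) - expG (-φ i)) • T (cs.simple i) + 1) * T u' := by
        rw [hecke_sq hA i]
    _ = (expG (φ i) - expG (-φ i)) • (T (cs.simple i) * T u') + T u' := by
        rw [add_mul, one_mul, smul_mul_assoc]
    _ = (expG (φ i) - expG (-φ i)) • T u + T (cs.simple i * u) := by rw [h1, hu']

end Aux

open Classical in
/-- Sign change: if `S = S₊ ∪ S₋` with no conjugacy between the parts (`P` picks
out `S₊`), `φ` a weight function, and `φ'` obtained by flipping the sign of `φ` on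
`S₋`, then the `ℤ[Γ]`-linear map `θ : H(W,S,φ) → H(W,S,φ')`,
`T_w ↦ (−1)^{ℓ₋(w)} T_w`, is a `ℤ[Γ]`-algebra isomorphism. -/
theorem stmt10 {B W Γ : Type*} [Group W] [AddCommGroup Γ] [LinearOrder Γ] [IsOrderedAddMonoid Γ]
    {M : CoxeterMatrix B} (cs : CoxeterSystem M W)
    (P : B → Prop)
    (hsep : ∀ i j : B, P i → ¬ P j → ¬ IsConj (cs.simple i) (cs.simple j))
    (φ φ' : B → Γ)
    (hφconj : ∀ i j : B, IsConj (cs.simple i) (cs.simple j) → φ i = φ j)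
    (hφ' : ∀ i : B, φ' i = if P i then φ i else -φ i)
    (ℓm : W → ℕ)
    (hℓm : ∀ (w : W) (l : List B), cs.wordProd l = w → cs.IsReduced l →
      ℓm w = (l.filter (fun i => decide (¬ P i))).length)
    {A A' : Type*} [Ring A] [Algebra (AddMonoidAlgebra ℤ Γ) A]
    [Ring A'] [Algebra (AddMonoidAlgebra ℤ Γ) A']
    (T : Module.Basis W (AddMonoidAlgebra ℤ Γ) A) (T' : Module.Basis W (AddMonoidAlgebra ℤ Γ) A')
    (hA : IsHeckeAlgebra cs φ T) (hA' : IsHeckeAlgebra cs φ' T')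
    (θ : A →ₗ[AddMonoidAlgebra ℤ Γ] A')
    (hθ : ∀ w : W, θ (T w) = ((-1 : ℤ) ^ ℓm w) • T' w) :
    θ 1 = 1 ∧ (∀ x y : A, θ (x * y) = θ x * θ y) ∧ Function.Bijective θ := by
  -- basic facts about ℓm
  have hred_nil : cs.IsReduced ([] : List B) := by
    simp [CoxeterSystem.IsReduced]
  have hℓm1 : ℓm 1 = 0 := by
    simpa using hℓm 1 [] (cs.wordProd_nil) hred_nil
  have hℓms : ∀ i : B, ℓm (cs.simple i) = if P i then 0 else 1 := by
    intro i
    have hred : cs.IsReduced [i] := by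
      simp [CoxeterSystem.IsReduced, cs.wordProd_cons, cs.length_simple]
    have h := hℓm (cs.simple i) [i] (by simp [cs.wordProd_cons]) hred
    by_cases hp : P i <;> simp [hp] at h ⊢ <;> omega
  have hadd : ∀ (i : B) (u : W), cs.length (cs.simple i * u) = cs.length u + 1 →
      ℓm (cs.simple i * u) = ℓm (cs.simple i) + ℓm u := by
    intro i u hlen
    obtain ⟨l, hl, rfl⟩ := cs.exists_reduced_word' u
    have hredc : cs.IsReduced (i :: l) := by
      unfold CoxeterSystem.IsReduced at hl ⊢
      rw [cs.wordProd_cons, hlen, hl, List.length_cons]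
    have h1 := hℓm _ (i :: l) (cs.wordProd_cons i l).symm hredc
    have h2 := hℓm _ l rfl hl
    rw [cs.wordProd_cons] at h1
    rw [h1, hℓms i]
    by_cases hp : P i <;> simp [List.filter_cons, hp, h2] <;> omega
  -- θ 1 = 1
  have hone : θ 1 = 1 := by
    rw [← hA.one, hθ, hℓm1, pow_zero, one_smul, hA'.one]
  refine ⟨hone, ?_, ?_⟩
  · -- multiplicativity
    -- convert ℤ-smul by signs into ℤ[Γ]-smul
    have hz : ∀ (n : ℕ) (x : A'), ((-1 : ℤ) ^ n) • x
        = ((-1 : AddMonoidAlgebra ℤ Γ) ^ n) • x := by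
      intro n x
      rw [← Int.cast_smul_eq_zsmul (AddMonoidAlgebra ℤ Γ)]
      push_cast
      ring_nf
    -- θ respects multiplication by T (simple i) on basis elements
    have hsimp : ∀ (i : B) (u : W),
        θ (T (cs.simple i) * T u) = θ (T (cs.simple i)) * θ (T u) := by
      intro i u
      rcases cs.length_simple_mul u i with hlen | hlen
      · -- length adds
        rw [hecke_simple_mul hA i u hlen, hθ, hθ, hθ, hadd i u hlen,
          ← hecke_simple_mul hA' i u hlen, smul_mul_assoc, mul_smul_comm,
          smul_smul, ← pow_add]
      · -- descent
        set u' := cs.simple i * u with hu'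
        have hu : u = cs.simple i * u' := by
          rw [hu', ← mul_assoc, cs.simple_mul_simple_self, one_mul]
        have hlen' : cs.length (cs.simple i * u') = cs.length u' + 1 := by
          rw [← hu]; omega
        have hℓmu : ℓm u = ℓm (cs.simple i) + ℓm u' := by
          rw [hu, hadd i u' hlen']
        rw [hecke_mul_descent hA i u hlen, map_add, map_smul]
        simp only [hθ]
        rw [smul_mul_assoc, mul_smul_comm, smul_smul, ← pow_add,
          hecke_mul_descent hA' i u hlen, ← hu']
        simp only [hz]
        rw [hℓmu, hφ' i]
        by_cases hp : P i
        · simp only [hp, if_true, hℓms i, if_pos hp, zero_add]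
          module
        · simp only [hp, if_false, hℓms i, if_neg hp, neg_neg]
          module
    -- extend to all x on the right
    have hsimpAll : ∀ (i : B) (x : A),
        θ (T (cs.simple i) * x) = θ (T (cs.simple i)) * θ x := by
      intro i
      have h : (θ.comp (LinearMap.mulLeft (AddMonoidAlgebra ℤ Γ) (T (cs.simple i))))
          = (LinearMap.mulLeft (AddMonoidAlgebra ℤ Γ) (θ (T (cs.simple i)))).comp θ :=
        Module.Basis.ext T (fun u => hsimp i u)
      exact fun x => DFunLike.congr_fun h x
    -- by induction on length: θ (T w * x) = θ (T w) * θ x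
    have hmulT : ∀ (n : ℕ) (w : W), cs.length w = n →
        ∀ x : A, θ (T w * x) = θ (T w) * θ x := by
      intro n
      induction n using Nat.strong_induction_on with
      | _ n ih =>
        intro w hw x
        obtain ⟨l, hl, rfl⟩ := cs.exists_reduced_word' w
        match l with
        | [] =>
          rw [cs.wordProd_nil, hA.one, one_mul, hone, one_mul]
        | i :: l' =>
          have hlen : cs.length (cs.wordProd (i :: l')) = l'.length + 1 := by
            rw [hl]; simp
          have hl' : cs.length (cs.wordProd l') = l'.length := by
            have h1 := cs.length_wordProd_le l'
            have h2 : cs.length (cs.wordProd (i :: l'))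
                ≤ cs.length (cs.simple i) + cs.length (cs.wordProd l') := by
              rw [cs.wordProd_cons]; exact cs.length_mul_le _ _
            rw [cs.length_simple] at h2
            omega
          have hadd2 : cs.length (cs.simple i * cs.wordProd l')
              = cs.length (cs.wordProd l') + 1 := by
            rw [← cs.wordProd_cons]; omega
          have hT : T (cs.wordProd (i :: l'))
              = T (cs.simple i) * T (cs.wordProd l') := by
            rw [hecke_simple_mul hA i _ hadd2, ← cs.wordProd_cons]
          have hlt : cs.length (cs.wordProd l') < n := by omega
          calc θ (T (cs.wordProd (i :: l')) * x)
              = θ (T (cs.simple i) * (T (cs.wordProd l') * x)) := by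
                rw [hT, mul_assoc]
            _ = θ (T (cs.simple i)) * θ (T (cs.wordProd l') * x) := hsimpAll i _
            _ = θ (T (cs.simple i)) * (θ (T (cs.wordProd l')) * θ x) := by
                rw [ih _ hlt _ rfl x]
            _ = (θ (T (cs.simple i)) * θ (T (cs.wordProd l'))) * θ x := by
                rw [mul_assoc]
            _ = θ (T (cs.simple i) * T (cs.wordProd l')) * θ x := by
                rw [hsimpAll i _]
            _ = θ (T (cs.wordProd (i :: l'))) * θ x := by rw [hT]
    intro x y
    have h : ∀ (w : W), θ (T w * y) = θ (T w) * θ y :=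
      fun w => hmulT (cs.length w) w rfl y
    have heq : (θ.comp (LinearMap.mulRight (AddMonoidAlgebra ℤ Γ) y))
        = (LinearMap.mulRight (AddMonoidAlgebra ℤ Γ) (θ y)).comp θ :=
      Module.Basis.ext T (fun w => h w)
    exact DFunLike.congr_fun heq x
  · -- bijectivity: construct the inverse map
    set ψ : A' →ₗ[AddMonoidAlgebra ℤ Γ] A :=
      T'.constr ℤ (fun w => ((-1 : ℤ) ^ ℓm w) • T w) with hψdef
    have hψ : ∀ w : W, ψ (T' w) = ((-1 : ℤ) ^ ℓm w) • T w := by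
      intro w; rw [hψdef, Module.Basis.constr_basis]
    have hsq : ∀ (n : ℕ) (x : A), ((-1 : ℤ) ^ n) • (((-1 : ℤ) ^ n) • x) = x := by
      intro n x
      rw [smul_smul, ← pow_add, Even.neg_one_pow ⟨n, by ring⟩, one_smul]
    have hsq' : ∀ (n : ℕ) (x : A'), ((-1 : ℤ) ^ n) • (((-1 : ℤ) ^ n) • x) = x := by
      intro n x
      rw [smul_smul, ← pow_add, Even.neg_one_pow ⟨n, by ring⟩, one_smul]
    have hleft : ∀ x : A, ψ (θ x) = x := by
      have h : ψ.comp θ = LinearMap.id :=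
        Module.Basis.ext T (fun w => by
          simp only [LinearMap.comp_apply, LinearMap.id_apply, hθ w, map_zsmul,
            hψ w]
          exact hsq _ _)
      exact fun x => DFunLike.congr_fun h x
    have hright : ∀ x : A', θ (ψ x) = x := by
      have h : θ.comp ψ = LinearMap.id :=
        Module.Basis.ext T' (fun w => by
          simp only [LinearMap.comp_apply, LinearMap.id_apply, hψ w, map_zsmul,
            hθ w]
          exact hsq' _ _)
      exact fun x => DFunLike.congr_fun h x
    exact ⟨Function.LeftInverse.injective hleft,
      Function.RightInverse.surjective hright⟩
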